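/- For h ≥ 3 and a finite set A of k ≥ 3 integers, |hA| = hk - h + 1 if and only if A is an arithmetic progression of length k. -/

import Mathlib

open Pointwise Finset

/-- The `h`-fold sumset of a finite set `A`. -/
def hfold {G : Type*} [AddCommMonoid G] [DecidableEq G] : ℕ → Finset G → Finset G
  | 0, _ => {0}
  | n + 1, A => hfold n A + A

/-- The `h`-fold restricted sumset of a finite set `A`: sums of `h` distinct elements. -/
def rfold {G : Type*} [AddCommMonoid G] [DecidableEq G] (h : ℕ) (A : Finset G) : Finset G :=
  (A.powersetCard h).image (fun S => S.sum id)

lemma hfold_succ (n : ℕ) (A : Finset ℤ) : hfold (n+1) A = hfold n A + A := rfl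

lemma hfold_one (A : Finset ℤ) : hfold 1 A = A := by
  show ({0} : Finset ℤ) + A = A
  rw [show ({0} : Finset ℤ) = 0 from rfl, zero_add]

lemma hfold_two (A : Finset ℤ) : hfold 2 A = A + A := by
  rw [hfold_succ, hfold_one]

lemma hfold_nonempty (n : ℕ) (A : Finset ℤ) (hA : A.Nonempty) : (hfold n A).Nonempty := by
  induction n with
  | zero => exact ⟨0, mem_singleton_self 0⟩
  | succ n ih => exact ih.add hA

lemma add_lower (B A : Finset ℤ) (hB : B.Nonempty) (hA : A.Nonempty) :
    B.card + A.card - 1 ≤ (B + A).card :=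
  cauchy_davenport_add_of_linearOrder_isCancelAdd hB hA

lemma smOn (f : ℕ → ℤ) (n : ℕ) (h : ∀ t, t + 1 < n → f t < f (t+1)) :
    StrictMonoOn f (Set.Iio n) := by
  intro a _ b hb hab
  induction b with
  | zero => omega
  | succ b ih =>
    rcases Nat.lt_succ_iff_lt_or_eq.mp hab with h' | h'
    · exact (ih (by simp only [Set.mem_Iio] at hb ⊢; omega) h').trans
        (h b (Set.mem_Iio.mp hb))
    · subst h'; exact h a (Set.mem_Iio.mp hb)

lemma exists_sorted (k : ℕ) (hk : 1 ≤ k) (A : Finset ℤ) (hA : A.card = k) :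
    ∃ a : ℕ → ℤ, (∀ i, a i ∈ A) ∧ Monotone a ∧
      (∀ i j, i < j → j ≤ k - 1 → a i < a j) ∧ A = (range k).image a := by
  refine ⟨fun i => A.orderEmbOfFin hA ⟨min i (k-1), by omega⟩, fun i => Finset.orderEmbOfFin_mem A hA _, ?_, ?_, ?_⟩
  · intro i j hij
    exact (A.orderEmbOfFin hA).monotone (by simp only [Fin.mk_le_mk]; omega)
  · intro i j hij hjk
    exact (A.orderEmbOfFin hA).strictMono (by simp only [Fin.mk_lt_mk]; omega)
  · symm
    apply Finset.eq_of_subset_of_card_le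
    · intro x hx
      rcases Finset.mem_image.mp hx with ⟨i, _, rfl⟩
      exact Finset.orderEmbOfFin_mem A hA _
    · have hcard : ((range k).image (fun i => A.orderEmbOfFin hA ⟨min i (k-1), by omega⟩)).card = k := by
        rw [Finset.card_image_of_injOn, Finset.card_range]
        intro i hi j hj hij
        simp only [Finset.mem_coe, Finset.mem_range] at hi hj
        have := (A.orderEmbOfFin hA).injective hij
        simp only [Fin.mk.injEq] at this
        omega
      omega

lemma ap_of_small_doubling (k : ℕ) (hk : 3 ≤ k) (A : Finset ℤ) (hA : A.card = k)
    (hAA : (A + A).card = 2 * k - 1) :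
    ∃ a d : ℤ, d ≠ 0 ∧ A = (Finset.range k).image (fun i : ℕ => a + (i : ℤ) * d) := by
  obtain ⟨a, hmem, hmono, hstrict, himg⟩ := exists_sorted k (by omega) A hA
  have hc1 : StrictMonoOn (fun t => a t + a (t - (k-1))) (Set.Iio (2*k-1)) := by
    apply smOn
    intro t ht
    by_cases htk : t + 1 ≤ k - 1
    · rw [show t + 1 - (k-1) = 0 by omega, show t - (k-1) = 0 by omega]
      exact add_lt_add_left (hstrict t (t+1) (by omega) htk) _
    · exact add_lt_add_of_le_of_lt (hmono (by omega))
        (hstrict (t - (k-1)) (t + 1 - (k-1)) (by omega) (by omega))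
  have hc2 : StrictMonoOn (fun t => a (t/2) + a ((t+1)/2)) (Set.Iio (2*k-1)) := by
    apply smOn
    intro t ht
    rcases Nat.even_or_odd t with ⟨i, hi⟩ | ⟨i, hi⟩
    · rw [show t/2 = i by omega, show (t+1)/2 = i by omega, show (t+1+1)/2 = i + 1 by omega]
      exact add_lt_add_right (hstrict i (i+1) (by omega) (by omega)) _
    · rw [show t/2 = i by omega, show (t+1)/2 = i + 1 by omega,
        show (t+1+1)/2 = i + 1 by omega]
      exact add_lt_add_left (hstrict i (i+1) (by omega) (by omega)) _
  have key : ∀ t < 2*k-1, a t + a (t - (k-1)) = a (t/2) + a ((t+1)/2) := by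
    have u1 := Finset.orderEmbOfFin_unique (f := fun j : Fin (2*k-1) => a j.val + a (j.val - (k-1)))
      hAA (fun j => Finset.add_mem_add (hmem _) (hmem _))
      (fun i j hij => hc1 i.isLt j.isLt hij)
    have u2 := Finset.orderEmbOfFin_unique (f := fun j : Fin (2*k-1) => a (j.val/2) + a ((j.val+1)/2))
      hAA (fun j => Finset.add_mem_add (hmem _) (hmem _))
      (fun i j hij => hc2 i.isLt j.isLt hij)
    intro t ht
    exact congrFun (u1.trans u2.symm) ⟨t, ht⟩
  have gap : ∀ t, t + 1 ≤ k - 1 → a (t+1) - a t = a (t/2 + 1) - a (t/2) := by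
    intro t ht
    have k1 := key t (by omega)
    have k2 := key (t+1) (by omega)
    rw [show t - (k-1) = 0 by omega] at k1
    rw [show t + 1 - (k-1) = 0 by omega, show (t+1+1)/2 = t/2 + 1 by omega] at k2
    linarith
  have const : ∀ t, t + 1 ≤ k - 1 → a (t+1) - a t = a 1 - a 0 := by
    intro t
    induction t using Nat.strong_induction_on with
    | _ t ih =>
      intro ht
      rcases Nat.eq_zero_or_pos t with rfl | hpos
      · rfl
      · rw [gap t ht, ih (t/2) (by omega) (by omega)]
  set d : ℤ := a 1 - a 0 with hd
  have hdpos : 0 < d := sub_pos.mpr (hstrict 0 1 (by omega) (by omega))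
  have val : ∀ i < k, a i = a 0 + (i : ℤ) * d := by
    intro i hi
    induction i with
    | zero => simp
    | succ i ih =>
      have h1 := const i (by omega)
      have h2 := ih (by omega)
      push_cast
      push_cast at h2
      linarith
  refine ⟨a 0, d, by positivity, ?_⟩
  rw [himg]
  apply Finset.image_congr
  intro i hi
  simp only [Finset.coe_range, Set.mem_Iio] at hi
  exact val i hi

lemma hfold_ap (a d : ℤ) (k h : ℕ) (hk : 1 ≤ k) (hh : 1 ≤ h) :
    hfold h ((Finset.range k).image (fun i : ℕ => a + (i : ℤ) * d)) =
      (Finset.range (h*(k-1)+1)).image (fun j : ℕ => (h : ℤ) * a + (j : ℤ) * d) := by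
  induction h with
  | zero => omega
  | succ h ih =>
    rcases Nat.eq_zero_or_pos h with rfl | hpos
    · rw [show (0:ℕ)+1 = 1 from rfl, hfold_one, show 1*(k-1)+1 = k by omega]
      apply Finset.image_congr
      intro i _
      push_cast
      ring
    · rw [hfold_succ, ih hpos]
      have hP : (h+1) * (k-1) = h*(k-1) + (k-1) := by ring
      ext x
      simp only [Finset.mem_add, Finset.mem_image, Finset.mem_range]
      constructor
      · rintro ⟨y, ⟨j, hj, rfl⟩, z, ⟨i, hi, rfl⟩, rfl⟩
        refine ⟨j + i, by omega, ?_⟩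
        push_cast
        ring
      · rintro ⟨m, hm, rfl⟩
        rw [hP] at hm
        obtain ⟨P, hPd⟩ : ∃ P, h * (k-1) = P := ⟨_, rfl⟩
        rw [hPd] at hm ⊢
        refine ⟨(h:ℤ)*a + ((min m P : ℕ) : ℤ) * d, ⟨min m P, by omega, rfl⟩,
          a + ((m - min m P : ℕ) : ℤ) * d, ⟨m - min m P, by omega, rfl⟩, ?_⟩
        have hsum : ((min m P : ℕ) : ℤ) + ((m - min m P : ℕ) : ℤ) = (m : ℤ) := by
          omega
        push_cast at hsum ⊢
        linear_combination d * hsum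

theorem stmt14 (h k : ℕ) (hh : 3 ≤ h) (hk : 3 ≤ k) (A : Finset ℤ) (hA : A.card = k) :
    (hfold h A).card = h * k - h + 1 ↔
      ∃ a d : ℤ, d ≠ 0 ∧ A = (Finset.range k).image (fun i : ℕ => a + (i : ℤ) * d) := by
  obtain ⟨K, rfl⟩ : ∃ K, k = K + 1 := ⟨k - 1, by omega⟩
  constructor
  · intro hcard
    have hne : A.Nonempty := Finset.card_pos.mp (by omega)
    -- growth step
    have step : ∀ m, (hfold m A).card + K ≤ (hfold (m+1) A).card := by
      intro m
      have hmne := hfold_nonempty m A hne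
      have := add_lower (hfold m A) A hmne hne
      rw [hA] at this
      have hm1 : 1 ≤ (hfold m A).card := Finset.card_pos.mpr hmne
      rw [hfold_succ]
      omega
    have grow : ∀ m, (hfold 2 A).card + m * K ≤ (hfold (m+2) A).card := by
      intro m
      induction m with
      | zero => simp
      | succ m ih =>
        have := step (m+2)
        have e : (m+1) * K = m * K + K := by ring
        rw [show m+1+2 = (m+2)+1 from rfl]
        omega
    have low2 : 2 * (K+1) - 1 ≤ (hfold 2 A).card := by
      have := add_lower A A hne hne
      rw [hA] at this
      rw [hfold_two]
      omega
    obtain ⟨m, rfl⟩ : ∃ m, h = m + 2 := ⟨h - 2, by omega⟩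
    have hgrow := grow m
    have e1 : (m+2) * (K+1) = m * K + m + 2 * K + 2 := by ring
    have e2 : (hfold (m+2) A).card = m * K + 2 * K + 1 := by omega
    have h2 : (hfold 2 A).card = 2 * (K+1) - 1 := by omega
    rw [hfold_two] at h2
    exact ap_of_small_doubling (K+1) hk A hA h2
  · rintro ⟨a, d, hd, rfl⟩
    rw [hfold_ap a d (K+1) h (by omega) (by omega)]
    rw [Finset.card_image_of_injOn, Finset.card_range]
    · obtain ⟨P, hPd⟩ : ∃ P, h * K = P := ⟨_, rfl⟩
      have e : h * (K+1) = P + h := by rw [← hPd]; ring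
      rw [show K+1-1 = K from rfl, hPd, e]
      omega
    · intro i _ j _ hij
      have hij' : (h:ℤ)*a + (i:ℤ)*d = (h:ℤ)*a + (j:ℤ)*d := hij
      have : (i : ℤ) * d = (j : ℤ) * d := by linarith
      have := mul_right_cancel₀ hd this
      exact_mod_cast this
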